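/- Let G = ⟨z⟩ × F₂ with z central of infinite order and F₂ free on x, y. The subgroup of Aut(G) generated by ξ (x ↦ xz, y ↦ y, z ↦ z) and η (x ↦ x, y ↦ yz, z ↦ z) is free abelian of rank 2 and is normal in Aut(G). -/

import Mathlib

open Multiplicative Subgroup

namespace Stmt16Aux

abbrev G := Multiplicative ℤ × FreeGroup Bool

/-- exponent sum of `true`. -/
def ex : FreeGroup Bool →* Multiplicative ℤ :=
  FreeGroup.lift (fun b => if b then ofAdd (1 : ℤ) else 1)

/-- exponent sum of `false`. -/
def ey : FreeGroup Bool →* Multiplicative ℤ :=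
  FreeGroup.lift (fun b => if b then 1 else ofAdd (1 : ℤ))

@[simp] lemma ex_t : ex (FreeGroup.of true) = ofAdd 1 := by simp [ex]
@[simp] lemma ex_f : ex (FreeGroup.of false) = 1 := by simp [ex]
@[simp] lemma ey_t : ey (FreeGroup.of true) = 1 := by simp [ey]
@[simp] lemma ey_f : ey (FreeGroup.of false) = ofAdd 1 := by simp [ey]

/-- central automorphism attached to a homomorphism `F₂ → ℤ`. -/
def A : (FreeGroup Bool →* Multiplicative ℤ) →* MulAut G where
  toFun c :=
    { toFun := fun p => (p.1 * c p.2, p.2)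
      invFun := fun p => (p.1 * (c p.2)⁻¹, p.2)
      left_inv := fun p => by simp [mul_assoc]
      right_inv := fun p => by simp [mul_assoc]
      map_mul' := fun p q => by
        ext
        · simp only [Prod.fst_mul, Prod.snd_mul, map_mul]
          exact (mul_mul_mul_comm p.1 q.1 (c p.2) (c q.2))
        · rfl }
  map_one' := by
    ext p <;> simp
  map_mul' c d := by
    ext p
    · show p.1 * (c p.2 * d p.2) = p.1 * d p.2 * c p.2
      rw [mul_assoc, mul_comm (c p.2)]
    · rfl

@[simp] lemma A_apply (c : FreeGroup Bool →* Multiplicative ℤ) (p : G) :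
    A c p = (p.1 * c p.2, p.2) := rfl

def exy : Multiplicative (ℤ × ℤ) →* (FreeGroup Bool →* Multiplicative ℤ) :=
  MonoidHom.mk' (fun q => ex ^ (toAdd q).1 * ey ^ (toAdd q).2)
    (by
      intro a b
      simp only [toAdd_mul, Prod.fst_add, Prod.snd_add, zpow_add]
      exact mul_mul_mul_comm _ _ _ _)

@[simp] lemma exy_apply (q : Multiplicative (ℤ × ℤ)) (w : FreeGroup Bool) :
    exy q w = ex w ^ (toAdd q).1 * ey w ^ (toAdd q).2 := rfl

def Phi : Multiplicative (ℤ × ℤ) →* MulAut G := A.comp exy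

@[simp] lemma ofAdd_one_zpow (v : Multiplicative ℤ) :
    (ofAdd (1 : ℤ)) ^ (toAdd v) = v := by
  apply toAdd.injective
  simp [toAdd_zpow]

lemma exists_exy (c : FreeGroup Bool →* Multiplicative ℤ) : ∃ q, exy q = c := by
  refine ⟨ofAdd (toAdd (c (FreeGroup.of true)), toAdd (c (FreeGroup.of false))), ?_⟩
  apply FreeGroup.ext_hom
  intro a
  cases a <;> simp

lemma zpow_z (k : Multiplicative ℤ) :
    ((ofAdd (1 : ℤ), (1 : FreeGroup Bool)) : G) ^ (toAdd k) = (k, 1) := by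
  ext
  · show (ofAdd (1:ℤ)) ^ toAdd k = k
    rw [← ofAdd_zsmul]
    simp
  · show (1 : FreeGroup Bool) ^ toAdd k = 1
    simp

lemma closure_xyz :
    Subgroup.closure ({((1 : Multiplicative ℤ), FreeGroup.of true),
      ((1 : Multiplicative ℤ), FreeGroup.of false),
      (ofAdd (1 : ℤ), (1 : FreeGroup Bool))} : Set G) = ⊤ := by
  rw [Subgroup.eq_top_iff']
  intro p
  set S : Set G := {((1 : Multiplicative ℤ), FreeGroup.of true),
      ((1 : Multiplicative ℤ), FreeGroup.of false),
      (ofAdd (1 : ℤ), (1 : FreeGroup Bool))} with hS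
  have h1 : ∀ a : Multiplicative ℤ, ((a, 1) : G) ∈ closure S := by
    intro a
    have : ((a, (1 : FreeGroup Bool)) : G)
        = ((ofAdd (1 : ℤ), (1 : FreeGroup Bool)) : G) ^ (toAdd a) := (zpow_z a).symm
    rw [this]
    exact zpow_mem (subset_closure (by simp [hS])) _
  have h2 : ∀ w : FreeGroup Bool, ((1, w) : G) ∈ closure S := by
    intro w
    induction w using FreeGroup.induction_on with
    | C1 => exact one_mem _
    | of b =>
      cases b
      · exact subset_closure (by simp [hS])
      · exact subset_closure (by simp [hS])
    | inv_of b hb =>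
      have : ((1, (FreeGroup.of b)⁻¹) : G) = ((1, FreeGroup.of b) : G)⁻¹ := by
        ext <;> simp
      rw [this]
      exact inv_mem hb
    | mul v w hv hw =>
      have : ((1, v * w) : G) = ((1, v) : G) * ((1, w) : G) := by ext <;> simp
      rw [this]; exact mul_mem hv hw
  have : p = ((p.1, 1) : G) * ((1, p.2) : G) := by ext <;> simp
  rw [this]
  exact mul_mem (h1 p.1) (h2 p.2)

lemma mulAut_ext {f g : MulAut G}
    (h1 : f ((1 : Multiplicative ℤ), FreeGroup.of true) = g ((1 : Multiplicative ℤ), FreeGroup.of true))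
    (h2 : f ((1 : Multiplicative ℤ), FreeGroup.of false) = g ((1 : Multiplicative ℤ), FreeGroup.of false))
    (h3 : f (ofAdd (1 : ℤ), (1 : FreeGroup Bool)) = g (ofAdd (1 : ℤ), (1 : FreeGroup Bool))) :
    f = g := by
  have H : (f : G →* G) = (g : G →* G) := by
    apply MonoidHom.eq_of_eqOn_dense closure_xyz
    rintro t (rfl | rfl | rfl) <;> simpa
  exact MulEquiv.ext fun p => DFunLike.congr_fun H p

/-! ### Free group of rank two is centerless -/

lemma not_commute_of {α : Type*} {a b : α} (hab : a ≠ b) :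
    ¬ Commute (FreeGroup.of a) (FreeGroup.of b) := by
  classical
  intro h
  have h' := congrArg FreeGroup.toWord h
  rw [show FreeGroup.of a = FreeGroup.mk [(a, true)] from rfl,
    show FreeGroup.of b = FreeGroup.mk [(b, true)] from rfl,
    FreeGroup.mul_mk, FreeGroup.mul_mk, FreeGroup.toWord_mk, FreeGroup.toWord_mk] at h'
  simp [FreeGroup.reduce, hab, hab.symm] at h'

lemma subsingleton_pow {β : Type*} [Subsingleton β] (b0 : β) (g : FreeGroup β) :
    ∃ k : ℤ, g = FreeGroup.of b0 ^ k := by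
  induction g using FreeGroup.induction_on with
  | C1 => exact ⟨0, by simp⟩
  | of b =>
    refine ⟨1, ?_⟩
    rw [Subsingleton.elim b b0, zpow_one]
  | inv_of b _ =>
    refine ⟨-1, ?_⟩
    rw [Subsingleton.elim b b0]
    simp
  | mul v w hv hw =>
    obtain ⟨k, rfl⟩ := hv
    obtain ⟨l, rfl⟩ := hw
    exact ⟨k + l, (zpow_add _ _ _).symm⟩

lemma exists_zpow_of_commute (w u : FreeGroup Bool) (h : Commute w u) (hu : u ≠ 1) :
    ∃ t : FreeGroup Bool, (∃ a : ℤ, w = t ^ a) ∧ (∃ b : ℤ, u = t ^ b) := by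
  classical
  set H := Subgroup.closure ({w, u} : Set (FreeGroup Bool)) with hH
  have hwH : w ∈ H := subset_closure (by simp)
  have huH : u ∈ H := subset_closure (by simp)
  have hcomm : ∀ p ∈ H, ∀ q ∈ H, Commute p q := by
    intro p hp q hq
    induction hp, hq using Subgroup.closure_induction₂ with
    | mem p q hp hq =>
      rcases hp with rfl | rfl <;> rcases hq with rfl | rfl
      · exact Commute.refl _
      · exact h
      · exact h.symm
      · exact Commute.refl _
    | one_left q hq => exact Commute.one_left _
    | one_right p hp => exact Commute.one_right _
    | mul_left p p' q hp hp' hq h1 h2 => exact h1.mul_left h2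
    | mul_right p q q' hp hq hq' h1 h2 => exact h1.mul_right h2
    | inv_left p q hp hq h1 => exact h1.inv_left
    | inv_right p q hp hq h1 => exact h1.inv_right
  let e : H ≃* FreeGroup (IsFreeGroup.Generators H) := IsFreeGroup.toFreeGroup H
  have hsub : Subsingleton (IsFreeGroup.Generators H) := by
    constructor
    intro a b
    by_contra hab
    refine not_commute_of hab ?_
    have hc : Commute (e.symm (FreeGroup.of a)) (e.symm (FreeGroup.of b)) :=
      Subtype.ext (hcomm _ (e.symm (FreeGroup.of a)).2 _ (e.symm (FreeGroup.of b)).2)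
    simpa using hc.map e.toMonoidHom
  by_cases hne : Nonempty (IsFreeGroup.Generators H)
  · obtain ⟨b0⟩ := hne
    refine ⟨(e.symm (FreeGroup.of b0) : FreeGroup Bool), ?_, ?_⟩
    · obtain ⟨a, ha⟩ := subsingleton_pow b0 (e ⟨w, hwH⟩)
      refine ⟨a, ?_⟩
      have : (⟨w, hwH⟩ : H) = (e.symm (FreeGroup.of b0)) ^ a := by
        apply e.injective
        simpa using ha
      have := congrArg (Subtype.val) this
      simpa using this
    · obtain ⟨b, hb⟩ := subsingleton_pow b0 (e ⟨u, huH⟩)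
      refine ⟨b, ?_⟩
      have : (⟨u, huH⟩ : H) = (e.symm (FreeGroup.of b0)) ^ b := by
        apply e.injective
        simpa using hb
      have := congrArg (Subtype.val) this
      simpa using this
  · exfalso
    have : IsEmpty (IsFreeGroup.Generators H) := not_nonempty_iff.mp hne
    have h1 : (⟨u, huH⟩ : H) = ⟨1, one_mem _⟩ := by
      apply e.injective
      exact Subsingleton.elim _ _
    exact hu (congrArg Subtype.val h1)

lemma commute_eq_one (w : FreeGroup Bool)
    (h1 : Commute w (FreeGroup.of true)) (h2 : Commute w (FreeGroup.of false)) :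
    w = 1 := by
  have key : ∀ (b : Bool) (t : FreeGroup Bool) (k : ℤ),
      FreeGroup.of b = t ^ k → t = FreeGroup.of b ∨ t = (FreeGroup.of b)⁻¹ := by
    intro b t k hk
    have hexp : (1 : ℤ) = k * toAdd ((if b then ex else ey) t) := by
      have := congrArg (fun g => toAdd ((if b then ex else ey) g)) hk
      cases b <;> simpa [map_zpow, toAdd_zpow, mul_comm] using this
    have hunit : k = 1 ∨ k = -1 := by
      have : IsUnit k := IsUnit.of_mul_eq_one _ hexp.symm
      exact Int.isUnit_iff.mp this
    rcases hunit with rfl | rfl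
    · left; rw [hk]; simp
    · right; rw [hk]; simp
  have hx : ∃ a : ℤ, w = FreeGroup.of true ^ a := by
    obtain ⟨t, ⟨a, rfl⟩, ⟨b, hb⟩⟩ :=
      exists_zpow_of_commute _ _ h1 (FreeGroup.of_ne_one true)
    rcases key true t b hb with rfl | rfl
    · exact ⟨a, rfl⟩
    · exact ⟨-a, by simp [inv_zpow, zpow_neg]⟩
  have hy : ∃ c : ℤ, w = FreeGroup.of false ^ c := by
    obtain ⟨t, ⟨a, rfl⟩, ⟨b, hb⟩⟩ :=
      exists_zpow_of_commute _ _ h2 (FreeGroup.of_ne_one false)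
    rcases key false t b hb with rfl | rfl
    · exact ⟨a, rfl⟩
    · exact ⟨-a, by simp [inv_zpow, zpow_neg]⟩
  obtain ⟨a, rfl⟩ := hx
  obtain ⟨c, hc⟩ := hy
  have : toAdd (ex (FreeGroup.of true ^ a)) = toAdd (ex (FreeGroup.of false ^ c)) := by
    rw [← hc]
  simp [map_zpow, toAdd_zpow] at this
  simp [this]

/-! ### central elements under automorphisms -/

lemma snd_aut_z (ψ : MulAut G) : (ψ (ofAdd (1 : ℤ), (1 : FreeGroup Bool))).2 = 1 := by
  have hzc : ∀ g : G, Commute ((ofAdd (1 : ℤ), (1 : FreeGroup Bool)) : G) g := by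
    intro g
    ext
    · exact mul_comm (ofAdd (1 : ℤ) : Multiplicative ℤ) g.1
    · simp
  have hcom : ∀ g : G, Commute (ψ (ofAdd (1 : ℤ), (1 : FreeGroup Bool))) g := by
    intro g
    have := (hzc (ψ⁻¹ g)).map ψ.toMonoidHom
    simpa using this
  apply commute_eq_one
  · have := hcom ((1 : Multiplicative ℤ), FreeGroup.of true)
    have h' := congrArg Prod.snd this
    simpa [Commute, SemiconjBy] using h'
  · have := hcom ((1 : Multiplicative ℤ), FreeGroup.of false)
    have h' := congrArg Prod.snd this
    simpa [Commute, SemiconjBy] using h'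

lemma aut_k1 (ψ : MulAut G) (k : Multiplicative ℤ) :
    ψ (k, (1 : FreeGroup Bool))
      = (k ^ toAdd ((ψ (ofAdd (1 : ℤ), (1 : FreeGroup Bool))).1), 1) := by
  have hz : ψ (ofAdd (1 : ℤ), (1 : FreeGroup Bool))
      = ((ψ (ofAdd (1 : ℤ), (1 : FreeGroup Bool))).1, 1) := by
    ext
    · rfl
    · exact snd_aut_z ψ
  calc ψ (k, (1 : FreeGroup Bool)) = ψ (((ofAdd (1:ℤ), (1 : FreeGroup Bool)) : G) ^ toAdd k) := by
        rw [zpow_z]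
    _ = (ψ (ofAdd (1:ℤ), (1 : FreeGroup Bool))) ^ toAdd k := map_zpow ψ _ _
    _ = (((ψ (ofAdd (1 : ℤ), (1 : FreeGroup Bool))).1) ^ toAdd k, 1) := by
        rw [hz]; ext <;> simp
    _ = (k ^ toAdd ((ψ (ofAdd (1 : ℤ), (1 : FreeGroup Bool))).1), 1) := by
        congr 1
        apply toAdd.injective
        simp [toAdd_zpow, mul_comm]

lemma conj_A (φ : MulAut G) (c : FreeGroup Bool →* Multiplicative ℤ) :
    ∃ c' : FreeGroup Bool →* Multiplicative ℤ, φ * A c * φ⁻¹ = A c' := by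
  set s : ℤ := toAdd ((φ (ofAdd (1 : ℤ), (1 : FreeGroup Bool))).1) with hs
  refine ⟨((c.comp ((MonoidHom.snd (Multiplicative ℤ) (FreeGroup Bool)).comp
      (φ⁻¹ : MulAut G).toMonoidHom)).comp
      (MonoidHom.inr (Multiplicative ℤ) (FreeGroup Bool))) ^ s, ?_⟩
  apply MulEquiv.ext
  intro g
  show φ (A c (φ⁻¹ g)) = _
  have hsnd : (φ⁻¹ g).2 = ((φ⁻¹ : MulAut G) ((1 : Multiplicative ℤ), g.2)).2 := by
    have hg : g = ((g.1, 1) : G) * ((1, g.2) : G) := by ext <;> simp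
    have : (φ⁻¹ : MulAut G) g
        = (φ⁻¹ : MulAut G) (g.1, 1) * (φ⁻¹ : MulAut G) (1, g.2) := by
      rw [← map_mul, ← hg]
    have h2 := congrArg Prod.snd this
    simp only [Prod.snd_mul] at h2
    rw [h2, aut_k1 (φ⁻¹ : MulAut G) g.1]
    simp
  have step1 : A c (φ⁻¹ g) = φ⁻¹ g * ((c (φ⁻¹ g).2), 1) := by
    ext <;> simp
  rw [step1, map_mul]
  simp only [MulAut.apply_inv_self]
  rw [aut_k1 φ (c (φ⁻¹ g).2)]
  ext
  · show g.1 * (c (φ⁻¹ g).2) ^ s = g.1 * _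
    congr 1
    show _ = (c (((φ⁻¹ : MulAut G) ((1 : Multiplicative ℤ), g.2)).2)) ^ s
    rw [hsnd]
  · show g.2 * 1 = g.2
    simp

end Stmt16Aux

open Stmt16Aux

theorem stmt_16
    (x y z : Multiplicative ℤ × FreeGroup Bool)
    (hx : x = (1, FreeGroup.of true))
    (hy : y = (1, FreeGroup.of false))
    (hz : z = (Multiplicative.ofAdd (1 : ℤ), 1))
    (ξ η : MulAut (Multiplicative ℤ × FreeGroup Bool))
    (hξ : ξ x = x * z ∧ ξ y = y ∧ ξ z = z)
    (hη : η x = x ∧ η y = y * z ∧ η z = z) :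
    (Subgroup.closure ({ξ, η} : Set (MulAut (Multiplicative ℤ × FreeGroup Bool)))).Normal ∧
    Nonempty ((Subgroup.closure ({ξ, η} : Set (MulAut (Multiplicative ℤ × FreeGroup Bool))))
      ≃* Multiplicative (ℤ × ℤ)) := by
  subst hx hy hz
  obtain ⟨hξx, hξy, hξz⟩ := hξ
  obtain ⟨hηx, hηy, hηz⟩ := hη
  have hξ' : ξ = Phi (ofAdd ((1 : ℤ), (0 : ℤ))) := by
    apply mulAut_ext
    · rw [hξx]; ext <;> simp [Phi]
    · rw [hξy]; ext <;> simp [Phi]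
    · rw [hξz]; ext <;> simp [Phi]
  have hη' : η = Phi (ofAdd ((0 : ℤ), (1 : ℤ))) := by
    apply mulAut_ext
    · rw [hηx]; ext <;> simp [Phi]
    · rw [hηy]; ext <;> simp [Phi]
    · rw [hηz]; ext <;> simp [Phi]
  have hrange : Subgroup.closure ({ξ, η} : Set (MulAut G)) = Phi.range := by
    apply le_antisymm
    · rw [Subgroup.closure_le]
      rintro t (rfl | rfl)
      · exact ⟨ofAdd ((1 : ℤ), (0 : ℤ)), hξ'.symm⟩
      · exact ⟨ofAdd ((0 : ℤ), (1 : ℤ)), hη'.symm⟩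
    · rintro t ⟨q, rfl⟩
      have hq : q = (ofAdd ((1 : ℤ), (0 : ℤ))) ^ (toAdd q).1
          * (ofAdd ((0 : ℤ), (1 : ℤ))) ^ (toAdd q).2 := by
        apply toAdd.injective
        ext <;> simp [toAdd_zpow]
      rw [hq, map_mul, map_zpow, map_zpow, ← hξ', ← hη']
      exact mul_mem (zpow_mem (Subgroup.subset_closure (by simp)) _)
        (zpow_mem (Subgroup.subset_closure (by simp)) _)
  constructor
  · constructor
    intro h hh φ
    rw [hrange] at hh ⊢
    obtain ⟨q, rfl⟩ := hh
    have hPhi : Phi q = A (exy q) := rfl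
    rw [hPhi]
    obtain ⟨c', hc'⟩ := conj_A φ (exy q)
    obtain ⟨q', hq'⟩ := exists_exy c'
    exact ⟨q', by rw [show Phi q' = A (exy q') from rfl, hq', ← hc']⟩
  · have hinj : Function.Injective Phi := by
      rw [injective_iff_map_eq_one]
      intro q hq
      have h1 := congrArg (fun ψ : MulAut G => ψ ((1 : Multiplicative ℤ), FreeGroup.of true)) hq
      have h2 := congrArg (fun ψ : MulAut G => ψ ((1 : Multiplicative ℤ), FreeGroup.of false)) hq
      simp [Phi] at h1 h2
      have h1' : (toAdd q).1 = 0 := by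
        have := congrArg toAdd h1
        exact this
      have h2' : (toAdd q).2 = 0 := by
        have := congrArg toAdd h2
        exact this
      apply toAdd.injective
      ext
      · simpa using h1'
      · simpa using h2'
    exact ⟨(MulEquiv.subgroupCongr hrange).trans (MonoidHom.ofInjective hinj).symm⟩
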